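/- (Theorem 1, recursion.) Under the stationarity hypotheses on φ, define ω(j) = Σ_{i∈ℕ} φ(i,j) for each j ∈ ℕ. Then ω satisfies the recursion: ω(0) = λ_e/(λ·t̄+1); ω(j) = α·ω(j−1) + φ(0,0) for 1 ≤ j ≤ t̄; and ω(j) = α·ω(j−1) + φ(0,0) − λ_e·Σ_{l=0}^{j−1−t̄} φ(0,l) for j ≥ t̄+1. -/

import Mathlib

open Filter

private lemma tsum_shift'' {f : ℕ → ℝ} (t : ℕ) (hf : ∀ i, i < t → f i = 0) :
    ∑' i, f i = ∑' k, f (t + k) := by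
  refine (Function.Injective.tsum_eq (f := f) (g := fun k => t + k)
    (fun a b h => by simpa using h) ?_).symm
  intro x hx
  rcases lt_or_ge x t with h | h
  · exact absurd (hf x h) hx
  · exact ⟨x - t, show t + (x - t) = x by omega⟩

/-- Theorem 1, recursion: under the stationarity hypotheses,
`ω j = ∑' i, φ i j` satisfies the stated recursion. -/
theorem omega_recursion
    (lam lam_e : ℝ) (hlam0 : 0 < lam) (hlam1 : lam < 1)
    (hle0 : 0 < lam_e) (hle1 : lam_e < 1)
    (tbar : ℕ)
    (φ : ℕ → ℕ → ℝ)
    (hnonneg : ∀ i j, 0 ≤ φ i j)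
    (hzero : ∀ i j, ¬(j + tbar + 1 ≤ i ∨ i ≤ j) → φ i j = 0)
    (hsummable : Summable fun p : ℕ × ℕ => φ p.1 p.2)
    (htotal : ∑' p : ℕ × ℕ, φ p.1 p.2 = 1)
    (ha : φ 0 0 = lam * lam_e * ∑' i : ℕ, ∑' j : ℕ, (if tbar ≤ i then φ i j else 0))
    (hb : ∀ j : ℕ, φ 0 (j + 1) =
      lam * (1 - lam_e) *
        ∑' i : ℕ, (if tbar ≤ i ∧ (i ≤ j ∨ tbar + j + 1 ≤ i) then φ i j else 0))
    (hcrec : ∀ i, i < tbar → ∀ j, φ (i + 1) (j + 1) = φ i j)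
    (hd : ∀ i, tbar ≤ i → ∀ j, φ (i + 1) (j + 1) = (1 - lam) * (1 - lam_e) * φ i j)
    (he : ∀ i : ℕ, (∑' j : ℕ, φ i j) =
      if i ≤ tbar then lam / (lam * (tbar : ℝ) + 1)
      else (1 - lam) ^ (i - tbar) * lam / (lam * (tbar : ℝ) + 1))
    (ω : ℕ → ℝ) (hω : ∀ j : ℕ, ω j = ∑' i : ℕ, φ i j) :
    ω 0 = lam_e / (lam * (tbar : ℝ) + 1) ∧
    (∀ j, 1 ≤ j → j ≤ tbar →
      ω j = (1 - lam) * (1 - lam_e) * ω (j - 1) + φ 0 0) ∧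
    (∀ j, tbar + 1 ≤ j →
      ω j = (1 - lam) * (1 - lam_e) * ω (j - 1) + φ 0 0
        - lam_e * ∑ l ∈ Finset.range (j - tbar), φ 0 l) := by
  have hden : (0:ℝ) < lam * (tbar : ℝ) + 1 := by positivity
  set c : ℝ := lam / (lam * (tbar : ℝ) + 1) with hc
  -- summability of rows and columns
  have hcol : ∀ j, Summable (fun i => φ i j) := fun j =>
    hsummable.comp_injective (i := fun i => (i, j))
      (fun a b h => by simpa using congrArg Prod.fst h)
  have hrow : ∀ i, Summable (fun j => φ i j) := fun i =>
    hsummable.comp_injective (i := fun j => (i, j)) (fun a b h => congrArg Prod.snd h)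
  -- geometric series
  have hgeom : ∑' k : ℕ, (1 - lam) ^ k = lam⁻¹ := by
    rw [tsum_geometric_of_lt_one (by linarith) (by linarith)]
    norm_num
  -- row sums in the tail
  have hpi : ∀ k : ℕ, (∑' j, φ (tbar + k) j) = (1 - lam) ^ k * c := by
    intro k
    rw [he (tbar + k)]
    rcases Nat.eq_zero_or_pos k with rfl | hk
    · simp
    · have h1 : ¬(tbar + k ≤ tbar) := by omega
      have h2 : tbar + k - tbar = k := by omega
      rw [if_neg h1, h2, mul_div_assoc]
  -- value of φ 0 0
  have hφ00 : φ 0 0 = lam_e * c := by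
    have h1 : ∀ i : ℕ, (∑' j, (if tbar ≤ i then φ i j else 0))
        = (if tbar ≤ i then (∑' j, φ i j) else 0) := by
      intro i; by_cases h : tbar ≤ i <;> simp [h]
    have h2 : (∑' i : ℕ, ∑' j : ℕ, (if tbar ≤ i then φ i j else 0)) = lam⁻¹ * c := by
      rw [tsum_congr h1,
        tsum_shift'' tbar (f := fun i => if tbar ≤ i then (∑' j, φ i j) else 0)
          (fun i hi => if_neg (by omega))]
      have : ∀ k : ℕ, (if tbar ≤ tbar + k then (∑' j, φ (tbar + k) j) else 0)
          = (1 - lam) ^ k * c := by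
        intro k; rw [if_pos (by omega), hpi k]
      rw [tsum_congr this, tsum_mul_right, hgeom]
    rw [ha, h2]
    field_simp
  -- tail column-0 values
  have htail0 : ∀ k : ℕ, φ (tbar + k + 1) 0 = (1 - lam) ^ k * ((1 - lam) * lam_e * c) := by
    intro k
    have h1 : (∑' j, φ (tbar + k + 1) j)
        = φ (tbar + k + 1) 0 + ∑' j, φ (tbar + k + 1) (j + 1) :=
      Summable.tsum_eq_zero_add (hrow _)
    have h2 : (∑' j, φ (tbar + k + 1) (j + 1))
        = (1 - lam) * (1 - lam_e) * ∑' j, φ (tbar + k) j := by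
      rw [← Summable.tsum_mul_left _ (hrow (tbar + k))]
      exact tsum_congr fun j => hd (tbar + k) (by omega) j
    have h3 : (∑' j, φ (tbar + k + 1) j) = (1 - lam) ^ (k + 1) * c := by
      have : tbar + k + 1 = tbar + (k + 1) := by omega
      rw [this, hpi (k + 1)]
    rw [h2, hpi k, h3] at h1
    linear_combination -h1
  -- value of ω 0
  have hω0 : ω 0 = lam_e * c / lam := by
    have h1 : ω 0 = φ 0 0 + ∑' i, φ (i + 1) 0 := by
      rw [hω 0]; exact Summable.tsum_eq_zero_add (hcol 0)
    have h2 : (∑' i, φ (i + 1) 0) = ∑' k, φ (tbar + k + 1) 0 := by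
      exact tsum_shift'' tbar (f := fun i => φ (i + 1) 0)
        (fun i hi => hzero (i + 1) 0 (by omega))
    have h3 : (∑' k, φ (tbar + k + 1) 0) = lam⁻¹ * ((1 - lam) * lam_e * c) := by
      rw [tsum_congr htail0, tsum_mul_right, hgeom]
    rw [h1, h2, h3, hφ00]
    field_simp
    ring
  -- partial sums over the head of a column
  set S : ℕ → ℝ := fun j => ∑ i ∈ Finset.range tbar, φ i j with hSdef
  have hfin : ∀ j, Summable (fun i => if i < tbar then φ i j else 0) := fun j =>
    summable_of_ne_finset_zero (s := Finset.range tbar)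
      (fun b hb => if_neg (by simpa using hb))
  have hSsum : ∀ j, (∑' i, (if i < tbar then φ i j else 0)) = S j := by
    intro j
    rw [tsum_eq_sum (s := Finset.range tbar) (fun b hb => if_neg (by simpa using hb))]
    exact Finset.sum_congr rfl fun i hi => if_pos (by simpa using hi)
  have hsplit : ∀ j, (∑' i, (if tbar ≤ i then φ i j else 0)) = ω j - S j := by
    intro j
    have h1 : (fun i => if tbar ≤ i then φ i j else 0)
        = fun i => φ i j - (if i < tbar then φ i j else 0) := by
      funext i
      by_cases h : tbar ≤ i
      · rw [if_pos h, if_neg (by omega), sub_zero]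
      · rw [if_neg h, if_pos (by omega), sub_self]
    rw [h1, Summable.tsum_sub (hcol j) (hfin j), hSsum j, hω j]
  -- equation (b) rewritten
  have hb' : ∀ j, φ 0 (j + 1) = lam * (1 - lam_e) * (ω j - S j) := by
    intro j
    rw [hb j, ← hsplit j]
    congr 1
    refine tsum_congr fun i => ?_
    by_cases h1 : tbar ≤ i
    · by_cases h2 : i ≤ j ∨ tbar + j + 1 ≤ i
      · rw [if_pos ⟨h1, h2⟩, if_pos h1]
      · rw [if_neg (by tauto), if_pos h1, hzero i j (by omega)]
    · rw [if_neg (by tauto), if_neg h1]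
  -- the master recursion
  have hmaster : ∀ j, ω (j + 1) = (1 - lam_e) * ω j + lam_e * S j := by
    intro j
    have hA : ∀ i, φ (i + 1) (j + 1)
        = (1 - lam) * (1 - lam_e) * φ i j
          + (1 - (1 - lam) * (1 - lam_e)) * (if i < tbar then φ i j else 0) := by
      intro i
      by_cases h : i < tbar
      · rw [if_pos h, hcrec i h j]; ring
      · rw [if_neg h, hd i (by omega) j, mul_zero, add_zero]
    have h1 : ω (j + 1) = φ 0 (j + 1) + ∑' i, φ (i + 1) (j + 1) := by
      rw [hω (j + 1)]; exact Summable.tsum_eq_zero_add (hcol (j + 1))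
    have h2 : (∑' i, φ (i + 1) (j + 1))
        = (1 - lam) * (1 - lam_e) * ω j + (1 - (1 - lam) * (1 - lam_e)) * S j := by
      rw [tsum_congr hA,
        Summable.tsum_add ((hcol j).mul_left _) ((hfin j).mul_left _),
        tsum_mul_left, tsum_mul_left, hSsum j, hω j]
    rw [h1, h2, hb' j]
    ring
  -- the chain identity
  have hchain : ∀ i, i ≤ tbar → ∀ j, i ≤ j → φ i j = φ 0 (j - i) := by
    intro i
    induction i with
    | zero => intro _ j _; simp
    | succ n ih =>
      intro hn j hj
      obtain ⟨m, rfl⟩ : ∃ m, j = m + 1 := ⟨j - 1, by omega⟩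
      rw [hcrec n (by omega) m, ih (by omega) m (by omega)]
      congr 1
      omega
  -- the key invariant
  have hstar : ∀ k, lam * (1 - lam_e) * ω k
      + lam_e * ∑ l ∈ Finset.range (k + 1), φ 0 l = φ 0 0 := by
    intro k
    induction k with
    | zero =>
      rw [hω0, hφ00, Finset.sum_range_one, hφ00]
      field_simp
      ring
    | succ n ih =>
      rw [Finset.sum_range_succ, hmaster n, hb' n]
      linear_combination ih
  -- S in the low range
  have hSlow : ∀ j, j < tbar → S j = ∑ l ∈ Finset.range (j + 1), φ 0 l := by
    intro j hj
    have h1 : S j = ∑ i ∈ Finset.range (j + 1), φ i j := by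
      rw [hSdef]
      refine (Finset.sum_subset (Finset.range_subset_range.2 (by omega)) ?_).symm
      intro i hi1 hi2
      exact hzero i j (by simp at hi1 hi2; omega)
    have h2 : ∑ i ∈ Finset.range (j + 1), φ i j = ∑ i ∈ Finset.range (j + 1), φ 0 (j - i) :=
      Finset.sum_congr rfl fun i hi =>
        hchain i (by have := Finset.mem_range.mp hi; omega) j
          (by have := Finset.mem_range.mp hi; omega)
    have h3 : ∑ i ∈ Finset.range (j + 1), φ 0 (j + 1 - 1 - i) = ∑ i ∈ Finset.range (j + 1), φ 0 i :=
      Finset.sum_range_reflect (fun l => φ 0 l) (j + 1)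
    rw [h1, h2, ← h3]
    exact Finset.sum_congr rfl fun i hi => by congr 1 <;> omega
  -- S in the high range
  have hShigh : ∀ k, tbar ≤ k →
      S k = (∑ l ∈ Finset.range (k + 1), φ 0 l) - ∑ l ∈ Finset.range (k + 1 - tbar), φ 0 l := by
    intro k hk
    have h1 : S k = ∑ i ∈ Finset.range tbar, φ 0 (k - i) :=
      Finset.sum_congr rfl fun i hi =>
        hchain i (by have := Finset.mem_range.mp hi; omega) k
          (by have := Finset.mem_range.mp hi; omega)
    have h2 : ∑ i ∈ Finset.range tbar, φ 0 (k - i)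
        = ∑ l ∈ Finset.Ico (k + 1 - tbar) (k + 1), φ 0 l := by
      refine Finset.sum_nbij' (fun i => k - i) (fun l => k - l) ?_ ?_ ?_ ?_ ?_
      · intro a haa; simp at haa ⊢; omega
      · intro a haa; simp at haa ⊢; omega
      · intro a haa; simp at haa ⊢; omega
      · intro a haa; simp at haa ⊢; omega
      · intro a haa; rfl
    have h3 : (∑ l ∈ Finset.range (k + 1 - tbar), φ 0 l)
        + ∑ l ∈ Finset.Ico (k + 1 - tbar) (k + 1), φ 0 l
        = ∑ l ∈ Finset.range (k + 1), φ 0 l := by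
      rw [Finset.range_eq_Ico, Finset.range_eq_Ico]
      exact Finset.sum_Ico_consecutive (fun l => φ 0 l) (m := 0) (n := k + 1 - tbar) (k := k + 1) (by omega) (by omega)
    rw [h1, h2]
    linarith [h3]
  refine ⟨?_, ?_, ?_⟩
  · rw [hω0, hc]
    field_simp
  · intro j h1 h2
    obtain ⟨k, rfl⟩ : ∃ k, j = k + 1 := ⟨j - 1, by omega⟩
    have hj1 : k + 1 - 1 = k := by omega
    rw [hj1, hmaster k, hSlow k (by omega)]
    linear_combination hstar k
  · intro j h1
    obtain ⟨k, rfl⟩ : ∃ k, j = k + 1 := ⟨j - 1, by omega⟩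
    have hj1 : k + 1 - 1 = k := by omega
    have hj2 : k + 1 - tbar = k + 1 - tbar := rfl
    rw [hj1, hmaster k, hShigh k (by omega)]
    linear_combination hstar k
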